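/- For any integer $k \ge 2$, the value of $\dim_k(G) - \dim_k(G - v)$ can be arbitrarily large: for every integer $N$ there exist a finite simple connected graph $G$ and a vertex $v \in V(G)$ such that $G - v$ is connected and $\dim_k(G) - \dim_k(G - v) \ge N$. -/

import Mathlib

open SimpleGraph

/-- The distance-`k` truncated distance `dₖ(x,y) = min{d(x,y), k+1}`, valued in `ℕ∞`
(so unreachable pairs have distance `⊤`, which is truncated to `k+1`). -/
noncomputable def distK {V : Type*} (G : SimpleGraph V) (k : ℕ) (x y : V) : ℕ∞ :=
  min (G.edist x y) (k + 1)

/-- `S` is a distance-`k` resolving set of `G`. -/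
def IsDistKResolving {V : Type*} (G : SimpleGraph V) (k : ℕ) (S : Set V) : Prop :=
  ∀ x y : V, x ≠ y → ∃ z ∈ S, distK G k x z ≠ distK G k y z

/-- The distance-`k` dimension of a finite graph `G`: the minimum cardinality of a
distance-`k` resolving set of `G`. -/
noncomputable def dimK {V : Type*} [Fintype V] (G : SimpleGraph V) (k : ℕ) : ℕ :=
  sInf { m | ∃ S : Finset V, IsDistKResolving G k ↑S ∧ S.card = m }

namespace Stmt17Aux

inductive Vt (p : ℕ) where
  | vv | cc | bs
  | xx (i : Fin (2^p)) | tt (i : Fin (2^p)) | bb (j : Fin p)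
deriving DecidableEq, Fintype


/-! ### Generic lemmas -/

section generic

variable {A B : Type*} {G : SimpleGraph A} {G' : SimpleGraph B} {k : ℕ}

lemma edist_iso_le (φ : G ≃g G') (x y : A) :
    G'.edist (φ x) (φ y) ≤ G.edist x y := by
  rcases eq_or_ne (G.edist x y) ⊤ with h | h
  · simp [h]
  · obtain ⟨w, hw⟩ := G.exists_walk_of_edist_ne_top h
    calc G'.edist (φ x) (φ y) ≤ ((w.map φ.toHom).length : ℕ∞) := SimpleGraph.edist_le _
      _ = (w.length : ℕ∞) := by rw [SimpleGraph.Walk.length_map]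
      _ = G.edist x y := hw

lemma edist_iso (φ : G ≃g G') (x y : A) :
    G'.edist (φ x) (φ y) = G.edist x y := by
  refine le_antisymm (edist_iso_le φ x y) ?_
  have h := edist_iso_le φ.symm (φ x) (φ y)
  simpa using h

lemma distK_iso (φ : G ≃g G') (x y : A) :
    distK G' k (φ x) (φ y) = distK G k x y := by
  rw [distK, distK, edist_iso]

lemma isRes_iso (φ : G ≃g G') {S : Finset A} [DecidableEq B]
    (h : IsDistKResolving G k ↑S) :
    IsDistKResolving G' k ↑(S.image φ) := by
  intro x y hxy
  obtain ⟨z, hz, hne⟩ := h (φ.symm x) (φ.symm y)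
    (fun hc => hxy (by simpa using congrArg φ hc))
  refine ⟨φ z, by rw [Finset.coe_image]; exact Set.mem_image_of_mem _ hz, ?_⟩
  have h1 : distK G' k x (φ z) = distK G k (φ.symm x) z := by
    conv_lhs => rw [show x = φ (φ.symm x) by simp]
    rw [distK_iso]
  have h2 : distK G' k y (φ z) = distK G k (φ.symm y) z := by
    conv_lhs => rw [show y = φ (φ.symm y) by simp]
    rw [distK_iso]
  rw [h1, h2]
  exact hne

lemma dimK_iso [Fintype A] [Fintype B] [DecidableEq A] [DecidableEq B] (φ : G ≃g G') :
    dimK G k = dimK G' k := by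
  unfold dimK
  congr 1
  ext m
  constructor
  · rintro ⟨S, hS, rfl⟩
    exact ⟨S.image φ, isRes_iso φ hS,
      Finset.card_image_of_injective _ φ.toEquiv.injective⟩
  · rintro ⟨S, hS, rfl⟩
    exact ⟨S.image φ.symm, isRes_iso φ.symm hS,
      Finset.card_image_of_injective _ φ.symm.toEquiv.injective⟩

lemma distK_self_ne {x y : A} (hne : x ≠ y) : distK G k x x ≠ distK G k y x := by
  have h0 : distK G k x x = 0 := by simp [distK]
  have h1 : 0 < distK G k y x := by
    rw [distK, lt_min_iff]
    exact ⟨G.edist_pos_of_ne hne.symm, by exact_mod_cast Nat.succ_pos k⟩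
  rw [h0]
  exact fun hc => h1.ne' hc.symm

lemma univ_resolving [Fintype A] : IsDistKResolving G k ↑(Finset.univ : Finset A) := by
  intro x y hne
  exact ⟨x, by simp, distK_self_ne hne⟩

lemma dimK_le [Fintype A] {S : Finset A} (hS : IsDistKResolving G k ↑S) :
    dimK G k ≤ S.card :=
  Nat.sInf_le ⟨S, hS, rfl⟩

lemma le_dimK [Fintype A] {m : ℕ}
    (h : ∀ S : Finset A, IsDistKResolving G k ↑S → m ≤ S.card) :
    m ≤ dimK G k := by
  have hne : {c | ∃ S : Finset A, IsDistKResolving G k ↑S ∧ S.card = c}.Nonempty :=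
    ⟨(Finset.univ : Finset A).card, Finset.univ, univ_resolving, rfl⟩
  obtain ⟨S, hS, hc⟩ := Nat.sInf_mem hne
  rw [dimK, ← hc]
  exact h S hS

lemma two_le_edist {x y : A} (hne : x ≠ y) (hadj : ¬ G.Adj x y) :
    2 ≤ G.edist x y := by
  by_contra h
  push_neg at h
  have h3 : G.edist x y < 3 := h.trans (by norm_num)
  have hnt : G.edist x y ≠ ⊤ := (h3.trans_le le_top).ne
  obtain ⟨w, hw⟩ := G.exists_walk_of_edist_ne_top hnt
  have hl : (w.length : ℕ∞) < 2 := hw ▸ h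
  have hl' : w.length < 2 := by exact_mod_cast hl
  cases w with
  | nil => exact hne rfl
  | cons ha w' =>
    cases w' with
    | nil => exact hadj ha
    | cons hb w'' => simp only [SimpleGraph.Walk.length_cons] at hl'; omega

lemma three_le_edist {x y : A} (hne : x ≠ y) (hadj : ¬ G.Adj x y)
    (hcom : ∀ z, ¬(G.Adj x z ∧ G.Adj z y)) :
    3 ≤ G.edist x y := by
  by_contra h
  push_neg at h
  have hnt : G.edist x y ≠ ⊤ := (h.trans_le le_top).ne
  obtain ⟨w, hw⟩ := G.exists_walk_of_edist_ne_top hnt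
  have hl : (w.length : ℕ∞) < 3 := hw ▸ h
  have hl' : w.length < 3 := by exact_mod_cast hl
  cases w with
  | nil => exact hne rfl
  | cons ha w' =>
    cases w' with
    | nil => exact hadj ha
    | cons hb w'' =>
      cases w'' with
      | nil => exact hcom _ ⟨ha, hb⟩
      | cons hc w''' => simp only [SimpleGraph.Walk.length_cons] at hl'; omega

lemma edist_eq_two {x y : A} (hne : x ≠ y) (hadj : ¬ G.Adj x y)
    {z : A} (h1 : G.Adj x z) (h2 : G.Adj z y) : G.edist x y = 2 := by
  refine le_antisymm ?_ (two_le_edist hne hadj)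
  have := SimpleGraph.edist_le (SimpleGraph.Walk.cons h1 (SimpleGraph.Walk.cons h2 SimpleGraph.Walk.nil))
  simpa using this

end generic

/-! ### The construction -/

def rel {p : ℕ} : Vt p → Vt p → Prop
  | .vv, .vv => False
  | .vv, _ => True
  | _, .vv => True
  | .cc, .xx _ => True
  | .xx _, .cc => True
  | .xx i, .tt l => i = l
  | .tt l, .xx i => i = l
  | .tt i, .bb j => Nat.testBit i.val j.val = true
  | .bb j, .tt i => Nat.testBit i.val j.val = true
  | .tt _, .bs => True
  | .bs, .tt _ => True
  | _, _ => False

def G0 (p : ℕ) : SimpleGraph (Vt p) where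
  Adj := rel
  symm := by constructor; intro a b; cases a <;> cases b <;> simp [rel]
  loopless := by constructor; intro a; cases a <;> simp [rel]


@[simp] lemma G0_adj {p : ℕ} {a b : Vt p} : (G0 p).Adj a b ↔ rel a b := Iff.rfl

section construction

variable {p : ℕ} {k : ℕ}

lemma adj_vv {a : Vt p} (h : a ≠ .vv) : (G0 p).Adj Vt.vv a := by
  cases a <;> first | exact absurd rfl h | simp [rel]

lemma G0_edist_two {a b : Vt p} (ha : a ≠ .vv) (hb : b ≠ .vv) (hne : a ≠ b)
    (hadj : ¬ (G0 p).Adj a b) : (G0 p).edist a b = 2 :=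
  edist_eq_two hne hadj ((adj_vv ha).symm) (adj_vv hb)

lemma G0_connected : (G0 p).Connected := by
  rw [connected_iff]
  refine ⟨?_, ⟨Vt.vv⟩⟩
  intro a b
  have h : ∀ c : Vt p, (G0 p).Reachable Vt.vv c := by
    intro c
    by_cases hc : c = Vt.vv
    · subst hc; exact SimpleGraph.Reachable.refl _
    · exact (adj_vv hc).reachable
  exact (h a).symm.trans (h b)

def pr0 {q : ℕ} (r : Fin (2^q)) : Fin (2^(q+1)) :=
  ⟨2*r.val, by have := r.isLt; rw [pow_succ]; omega⟩
def pr1 {q : ℕ} (r : Fin (2^q)) : Fin (2^(q+1)) :=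
  ⟨2*r.val+1, by have := r.isLt; rw [pow_succ]; omega⟩

lemma distK_eq_outside {q : ℕ} (r : Fin (2^q)) (z : Vt (q+1))
    (h0 : z ≠ .xx (pr0 r)) (h1 : z ≠ .xx (pr1 r))
    (h2 : z ≠ .tt (pr0 r)) (h3 : z ≠ .tt (pr1 r)) :
    distK (G0 (q+1)) k (.xx (pr0 r)) z = distK (G0 (q+1)) k (.xx (pr1 r)) z := by
  suffices h : (G0 (q+1)).edist (.xx (pr0 r)) z = (G0 (q+1)).edist (.xx (pr1 r)) z by
    rw [distK, distK, h]
  have e2 : ∀ (i : Fin (2^(q+1))), z ≠ .xx i → ¬ (G0 (q+1)).Adj (.xx i) z →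
      z ≠ Vt.vv → (G0 (q+1)).edist (.xx i) z = 2 := by
    intro i hz hadj hzv
    exact G0_edist_two (by simp) hzv (Ne.symm hz) hadj
  cases z with
  | vv =>
    rw [SimpleGraph.edist_eq_one_iff_adj.mpr ((adj_vv (by simp)).symm),
      SimpleGraph.edist_eq_one_iff_adj.mpr ((adj_vv (by simp)).symm)]
  | cc =>
    rw [SimpleGraph.edist_eq_one_iff_adj.mpr (by simp [rel]),
      SimpleGraph.edist_eq_one_iff_adj.mpr (by simp [rel])]
  | xx l =>
    rw [e2 _ h0 (by simp [rel]) (by simp), e2 _ h1 (by simp [rel]) (by simp)]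
  | tt l =>
    have hl0 : ¬ (pr0 r = l) := fun hc => h2 (by rw [hc])
    have hl1 : ¬ (pr1 r = l) := fun hc => h3 (by rw [hc])
    rw [e2 _ (by simp) (by simp [rel, hl0]) (by simp),
      e2 _ (by simp) (by simp [rel, hl1]) (by simp)]
  | bb j =>
    rw [e2 _ (by simp) (by simp [rel]) (by simp), e2 _ (by simp) (by simp [rel]) (by simp)]
  | bs =>
    rw [e2 _ (by simp) (by simp [rel]) (by simp), e2 _ (by simp) (by simp [rel]) (by simp)]

lemma card_lb {q : ℕ} {S : Finset (Vt (q+1))}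
    (hS : IsDistKResolving (G0 (q+1)) k ↑S) : 2^q ≤ S.card := by
  have key : ∀ r : Fin (2^q), ∃ z, z ∈ S ∧
      (z = .xx (pr0 r) ∨ z = .xx (pr1 r) ∨ z = .tt (pr0 r) ∨ z = .tt (pr1 r)) := by
    intro r
    obtain ⟨z, hz, hne⟩ := hS (.xx (pr0 r)) (.xx (pr1 r))
      (by simp only [ne_eq, Vt.xx.injEq, pr0, pr1, Fin.mk.injEq]; omega)
    refine ⟨z, hz, ?_⟩
    by_contra hmem
    push_neg at hmem
    exact hne (distK_eq_outside r z hmem.1 hmem.2.1 hmem.2.2.1 hmem.2.2.2)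
  choose f hfS hfR using key
  have hinj : Function.Injective f := by
    intro r r' h
    have h1 := hfR r
    have h2 := hfR r'
    rw [h] at h1
    apply Fin.ext
    rcases h1 with h1|h1|h1|h1 <;> rcases h2 with h2|h2|h2|h2 <;>
      (have he := h1.symm.trans h2;
       simp only [pr0, pr1, Vt.xx.injEq, Vt.tt.injEq, Fin.mk.injEq, reduceCtorEq] at he <;>
       omega)
  calc (2^q : ℕ) = (Finset.univ : Finset (Fin (2^q))).card := by simp
    _ ≤ S.card := Finset.card_le_card_of_injOn f (fun r _ => hfS r) hinj.injOn

/-! ### the graph with `vv` removed -/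

def HS (p : ℕ) : Set (Vt p) := {u : Vt p | u ≠ Vt.vv}

def Hv (p : ℕ) : SimpleGraph (HS p) := (G0 p).induce (HS p)

lemma Hv_adj {a b : HS p} : (Hv p).Adj a b ↔ rel a.val b.val := Iff.rfl

def cE (p : ℕ) : HS p := ⟨.cc, by simp [HS]⟩
def bsE (p : ℕ) : HS p := ⟨.bs, by simp [HS]⟩
def xE {p : ℕ} (i : Fin (2^p)) : HS p := ⟨.xx i, by simp [HS]⟩
def tE {p : ℕ} (i : Fin (2^p)) : HS p := ⟨.tt i, by simp [HS]⟩
def bE {p : ℕ} (j : Fin p) : HS p := ⟨.bb j, by simp [HS]⟩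

lemma adj_c_x (i : Fin (2^p)) : (Hv p).Adj (cE p) (xE i) := by
  rw [Hv_adj]; simp [cE, xE, rel]

lemma adj_x_t (i : Fin (2^p)) : (Hv p).Adj (xE i) (tE i) := by
  rw [Hv_adj]; simp [tE, xE, rel]

lemma adj_t_b {i : Fin (2^p)} {j : Fin p} (h : Nat.testBit i.val j.val = true) :
    (Hv p).Adj (tE i) (bE j) := by
  rw [Hv_adj]; simpa [tE, bE, rel] using h

lemma adj_t_bs (i : Fin (2^p)) : (Hv p).Adj (tE i) (bsE p) := by
  rw [Hv_adj]; simp [tE, bsE, rel]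

lemma Hv_connected : (Hv p).Connected := by
  rw [connected_iff]
  refine ⟨?_, ⟨cE p⟩⟩
  have h : ∀ z : HS p, (Hv p).Reachable z (cE p) := by
    rintro ⟨zv, hzv⟩
    cases zv with
    | vv => exact absurd rfl hzv
    | cc => exact SimpleGraph.Reachable.refl _
    | xx i => exact (adj_c_x i).symm.reachable
    | tt i => exact ((adj_x_t i).symm.reachable).trans (adj_c_x i).symm.reachable
    | bb j =>
      have hlt : 2^j.val < 2^p := Nat.pow_lt_pow_right one_lt_two j.isLt
      have hb : Nat.testBit ((⟨2^j.val, hlt⟩ : Fin (2^p)) : ℕ) j.val = true :=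
        Nat.testBit_two_pow_self
      exact ((adj_t_b hb).symm.reachable).trans
        (((adj_x_t _).symm.reachable).trans (adj_c_x _).symm.reachable)
    | bs =>
      have h0 : (0 : ℕ) < 2^p := by positivity
      exact ((adj_t_bs ⟨0, h0⟩).symm.reachable).trans
        (((adj_x_t _).symm.reachable).trans (adj_c_x _).symm.reachable)
  intro a b
  exact (h a).trans (h b).symm

lemma ne_E_vt : ∀ (i l : Fin (2^p)) (j : Fin p),
    (xE i ≠ tE l) ∧ (cE p ≠ tE l) ∧ (xE i ≠ bE j) ∧ (tE i ≠ bE j) := by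
  intro i l j
  refine ⟨?_, ?_, ?_, ?_⟩ <;> (intro hc; exact absurd (congrArg Subtype.val hc) (by simp [xE, tE, cE, bE]))

lemma ed_x_c (i : Fin (2^p)) : (Hv p).edist (xE i) (cE p) = 1 :=
  SimpleGraph.edist_eq_one_iff_adj.mpr (adj_c_x i).symm

lemma ed_t_c (i : Fin (2^p)) : (Hv p).edist (tE i) (cE p) = 2 := by
  refine edist_eq_two (fun hc => absurd (congrArg Subtype.val hc) (by simp [tE, cE]))
      (fun hc => ?_) (adj_x_t i).symm (adj_c_x i).symm
  rw [Hv_adj] at hc; simp [tE, cE, rel] at hc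

lemma ed_x_b_set {i : Fin (2^p)} {j : Fin p} (h : Nat.testBit i.val j.val = true) :
    (Hv p).edist (xE i) (bE j) = 2 := by
  refine edist_eq_two ((ne_E_vt i i j).2.2.1) (fun hc => ?_) (adj_x_t i) (adj_t_b h)
  rw [Hv_adj] at hc; simp [xE, bE, rel] at hc

lemma ed_x_b_unset {i : Fin (2^p)} {j : Fin p} (h : Nat.testBit i.val j.val = false) :
    3 ≤ (Hv p).edist (xE i) (bE j) := by
  refine three_le_edist ((ne_E_vt i i j).2.2.1) (fun hc => ?_) ?_
  · rw [Hv_adj] at hc; simp [xE, bE, rel] at hc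
  · rintro ⟨zv, hzv⟩ ⟨h1, h2⟩
    rw [Hv_adj] at h1 h2
    cases zv with
    | vv => exact absurd rfl hzv
    | cc => simp [xE, bE, rel] at h2
    | xx l => simp [xE, rel] at h1
    | tt l =>
      have hil : i = l := by simpa [xE, rel] using h1
      subst hil
      have : Nat.testBit i.val j.val = true := by simpa [bE, rel] using h2
      rw [this] at h; simp at h
    | bb j' => simp [xE, rel] at h1
    | bs => simp [xE, bE, rel] at h2

lemma ed_t_b_set {i : Fin (2^p)} {j : Fin p} (h : Nat.testBit i.val j.val = true) :
    (Hv p).edist (tE i) (bE j) = 1 :=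
  SimpleGraph.edist_eq_one_iff_adj.mpr (adj_t_b h)

lemma ed_t_b_unset {i : Fin (2^p)} {j : Fin p} (h : Nat.testBit i.val j.val = false) :
    2 ≤ (Hv p).edist (tE i) (bE j) := by
  refine two_le_edist ((ne_E_vt i i j).2.2.2) (fun hc => ?_)
  rw [Hv_adj] at hc
  have : Nat.testBit i.val j.val = true := by simpa [tE, bE, rel] using hc
  rw [this] at h; simp at h

lemma exists_bit_diff {i l : Fin (2^p)} (h : i ≠ l) :
    ∃ j : Fin p, i.val.testBit j.val ≠ l.val.testBit j.val := by
  by_contra hc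
  push_neg at hc
  apply h
  apply Fin.ext
  apply Nat.eq_of_testBit_eq
  intro n
  by_cases hn : n < p
  · exact hc ⟨n, hn⟩
  · rw [Nat.testBit_lt_two_pow (lt_of_lt_of_le i.isLt
        (Nat.pow_le_pow_right (by norm_num) (le_of_not_gt hn))),
      Nat.testBit_lt_two_pow (lt_of_lt_of_le l.isLt
        (Nat.pow_le_pow_right (by norm_num) (le_of_not_gt hn)))]

def SB (p : ℕ) : Finset (HS p) :=
  insert (cE p) (insert (bsE p) (Finset.univ.image (bE (p := p))))

lemma SB_card : (SB p).card = p + 2 := by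
  have hinj : Function.Injective (bE (p := p)) := by
    intro a b h
    simpa [bE] using congrArg Subtype.val h
  have h1 : bsE p ∉ Finset.univ.image (bE (p := p)) := by
    simp only [Finset.mem_image, not_exists]
    rintro j ⟨-, hc⟩
    exact absurd (congrArg Subtype.val hc) (by simp [bE, bsE])
  have h2 : cE p ∉ insert (bsE p) (Finset.univ.image (bE (p := p))) := by
    simp only [Finset.mem_insert, Finset.mem_image, not_or, not_exists]
    refine ⟨fun hc => absurd (congrArg Subtype.val hc) (by simp [cE, bsE]), ?_⟩
    rintro j ⟨-, hc⟩
    exact absurd (congrArg Subtype.val hc) (by simp [cE, bE])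
  rw [SB, Finset.card_insert_of_notMem h2, Finset.card_insert_of_notMem h1,
    Finset.card_image_of_injective _ hinj, Finset.card_univ, Fintype.card_fin]

lemma mem_SB_c : cE p ∈ SB p := by simp [SB]
lemma mem_SB_b (j : Fin p) : bE j ∈ SB p := by
  simp only [SB, Finset.mem_insert, Finset.mem_image]
  exact Or.inr (Or.inr ⟨j, Finset.mem_univ j, rfl⟩)

lemma SB_resolving (hk : 2 ≤ k) : IsDistKResolving (Hv p) k ↑(SB p) := by
  have hK2 : (2 : ℕ∞) ≤ (k : ℕ∞) + 1 := by
    have : ((2:ℕ) : ℕ∞) ≤ ((k+1 : ℕ) : ℕ∞) := by exact_mod_cast Nat.le_succ_of_le hk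
    simpa using this
  have hK3 : (3 : ℕ∞) ≤ (k : ℕ∞) + 1 := by
    have : ((3:ℕ) : ℕ∞) ≤ ((k+1 : ℕ) : ℕ∞) := by exact_mod_cast Nat.succ_le_succ hk
    simpa using this
  have not32 : ¬ ((3:ℕ∞) ≤ 2) := by norm_num
  have not21 : ¬ ((2:ℕ∞) ≤ 1) := by norm_num
  -- x vs x case helper
  have hxx : ∀ (i l : Fin (2^p)), i ≠ l →
      ∃ z ∈ (SB p : Set (HS p)), distK (Hv p) k (xE i) z ≠ distK (Hv p) k (xE l) z := by
    intro i l hil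
    obtain ⟨j, hj⟩ := exists_bit_diff hil
    have main : ∀ (i l : Fin (2^p)), Nat.testBit i.val j.val = true →
        Nat.testBit l.val j.val = false →
        distK (Hv p) k (xE i) (bE j) ≠ distK (Hv p) k (xE l) (bE j) := by
      intro i l hi hl
      have h2 : distK (Hv p) k (xE i) (bE j) = 2 := by
        rw [distK, ed_x_b_set hi]; exact min_eq_left hK2
      have h3 : (3:ℕ∞) ≤ distK (Hv p) k (xE l) (bE j) :=
        le_min (ed_x_b_unset hl) hK3
      rw [h2]
      intro hc
      rw [← hc] at h3
      exact not32 h3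
    rcases Bool.eq_false_or_eq_true (i.val.testBit j.val) with hi | hi <;>
      rcases Bool.eq_false_or_eq_true (l.val.testBit j.val) with hl | hl
    · rw [hi, hl] at hj; exact absurd rfl hj
    · exact ⟨bE j, mem_SB_b j, main i l hi hl⟩
    · exact ⟨bE j, mem_SB_b j, (main l i hl hi).symm⟩
    · rw [hi, hl] at hj; exact absurd rfl hj
  -- t vs t case helper
  have htt : ∀ (i l : Fin (2^p)), i ≠ l →
      ∃ z ∈ (SB p : Set (HS p)), distK (Hv p) k (tE i) z ≠ distK (Hv p) k (tE l) z := by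
    intro i l hil
    obtain ⟨j, hj⟩ := exists_bit_diff hil
    have main : ∀ (i l : Fin (2^p)), Nat.testBit i.val j.val = true →
        Nat.testBit l.val j.val = false →
        distK (Hv p) k (tE i) (bE j) ≠ distK (Hv p) k (tE l) (bE j) := by
      intro i l hi hl
      have h1 : distK (Hv p) k (tE i) (bE j) = 1 := by
        rw [distK, ed_t_b_set hi]
        exact min_eq_left (le_trans (by norm_num) hK2)
      have h2 : (2:ℕ∞) ≤ distK (Hv p) k (tE l) (bE j) :=
        le_min (ed_t_b_unset hl) hK2
      rw [h1]
      intro hc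
      rw [← hc] at h2
      exact not21 h2
    rcases Bool.eq_false_or_eq_true (i.val.testBit j.val) with hi | hi <;>
      rcases Bool.eq_false_or_eq_true (l.val.testBit j.val) with hl | hl
    · rw [hi, hl] at hj; exact absurd rfl hj
    · exact ⟨bE j, mem_SB_b j, main i l hi hl⟩
    · exact ⟨bE j, mem_SB_b j, (main l i hl hi).symm⟩
    · rw [hi, hl] at hj; exact absurd rfl hj
  -- x vs t case helper
  have hxt : ∀ (i l : Fin (2^p)),
      distK (Hv p) k (xE i) (cE p) ≠ distK (Hv p) k (tE l) (cE p) := by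
    intro i l
    have h1 : distK (Hv p) k (xE i) (cE p) = 1 := by
      rw [distK, ed_x_c]
      exact min_eq_left (le_trans (by norm_num) hK2)
    have h2 : distK (Hv p) k (tE l) (cE p) = 2 := by
      rw [distK, ed_t_c]
      exact min_eq_left hK2
    rw [h1, h2]
    norm_num
  intro a b hab
  by_cases haS : a ∈ SB p
  · exact ⟨a, haS, distK_self_ne hab⟩
  by_cases hbS : b ∈ SB p
  · exact ⟨b, hbS, (distK_self_ne hab.symm).symm⟩
  obtain ⟨av, hav⟩ := a
  obtain ⟨bv, hbv⟩ := b
  cases av with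
  | vv => exact absurd rfl hav
  | cc => exact absurd (by simpa [cE] using mem_SB_c (p := p)) haS
  | bs => exact absurd (by simp [SB, bsE]) haS
  | bb j => exact absurd (by simpa [bE] using mem_SB_b j) haS
  | xx i =>
    cases bv with
    | vv => exact absurd rfl hbv
    | cc => exact absurd (by simpa [cE] using mem_SB_c (p := p)) hbS
    | bs => exact absurd (by simp [SB, bsE]) hbS
    | bb j => exact absurd (by simpa [bE] using mem_SB_b j) hbS
    | xx l =>
      have hil : i ≠ l := by
        intro hc; subst hc; exact hab rfl
      exact hxx i l hil
    | tt l => exact ⟨cE p, mem_SB_c, hxt i l⟩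
  | tt i =>
    cases bv with
    | vv => exact absurd rfl hbv
    | cc => exact absurd (by simpa [cE] using mem_SB_c (p := p)) hbS
    | bs => exact absurd (by simp [SB, bsE]) hbS
    | bb j => exact absurd (by simpa [bE] using mem_SB_b j) hbS
    | tt l =>
      have hil : i ≠ l := by
        intro hc; subst hc; exact hab rfl
      exact htt i l hil
    | xx l => exact ⟨cE p, mem_SB_c, (hxt l i).symm⟩

end construction

end Stmt17Aux

/-- For any integer `k ≥ 2`, `dimₖ(G) - dimₖ(G - v)` can be arbitrarily large. -/
theorem stmt17 (k : ℕ) (hk : 2 ≤ k) (N : ℤ) :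
    ∃ (n : ℕ) (G : SimpleGraph (Fin n)) (v : Fin n),
      G.Connected ∧ (G.induce {u : Fin n | u ≠ v}).Connected ∧
      N ≤ (dimK G k : ℤ) - (dimK (G.induce {u : Fin n | u ≠ v}) k : ℤ) := by
  classical
  open Stmt17Aux in
  set q : ℕ := N.toNat + 3 with hq
  set p : ℕ := q + 1 with hp
  set e : Vt p ≃ Fin (Fintype.card (Vt p)) := Fintype.equivFin (Vt p) with he
  set GF : SimpleGraph (Fin (Fintype.card (Vt p))) := SimpleGraph.comap e.symm (G0 p) with hGF
  have isoG : G0 p ≃g GF := by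
    refine ⟨e, ?_⟩
    intro a b
    simp [hGF]
  have isoH : Hv p ≃g GF.induce {u | u ≠ e Vt.vv} := by
    refine ⟨e.subtypeEquiv fun a => ?_, ?_⟩
    · constructor
      · intro h hc
        exact h (e.injective hc)
      · intro h hc
        exact h (by rw [hc])
    · rintro ⟨a, ha⟩ ⟨b, hb⟩
      rw [Equiv.subtypeEquiv_apply, Equiv.subtypeEquiv_apply]
      simp [hGF, Hv, HS, Equiv.symm_apply_apply]
  refine ⟨Fintype.card (Vt p), GF, e Vt.vv, isoG.connected_iff.mp G0_connected,
    isoH.connected_iff.mp Hv_connected, ?_⟩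
  have e1 : dimK GF k = dimK (G0 p) k := (dimK_iso isoG).symm
  have e2 : dimK (GF.induce {u | u ≠ e Vt.vv}) k = dimK (Hv p) k := (dimK_iso isoH).symm
  have lb : 2^q ≤ dimK (G0 p) k := le_dimK (fun S hS => card_lb hS)
  have ub : dimK (Hv p) k ≤ p + 2 := by
    have := dimK_le (SB_resolving (p := p) hk)
    rwa [SB_card] at this
  have hpow : N.toNat < 2 ^ N.toNat := Nat.lt_two_pow_self
  have hpow2 : 2 ^ q = 8 * 2 ^ N.toNat := by
    rw [hq, pow_add]; ring
  have hbig : 2 * N.toNat + 6 ≤ 2 ^ q := by omega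
  have hN : N ≤ (N.toNat : ℤ) := Int.self_le_toNat N
  rw [e1, e2]
  have lb' : (2^q : ℤ) ≤ (dimK (G0 p) k : ℤ) := by exact_mod_cast lb
  have ub' : (dimK (Hv p) k : ℤ) ≤ (p : ℤ) + 2 := by exact_mod_cast ub
  have hbig' : 2 * (N.toNat : ℤ) + 6 ≤ (2^q : ℤ) := by exact_mod_cast hbig
  omega
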